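/- Iwahori–Hecke quadratic relation (Theorem 2): for every index i with 1 ≤ i ≤ n−1, the bowling-ball matrix M_i satisfies (q·I + M_i)(I − M_i) = 0, where I is the identity matrix; equivalently M_i² = (1 − q)·M_i + q·I. -/

import Mathlib

open Matrix

/-- The tuple `u` with the entries in positions `i` and `i+1` interchanged
(0-indexed; returns `u` unchanged if `i+1` is out of range). -/
def swapTup (n N : ℕ) (i : ℕ) (u : Fin n → Fin (N + 1)) : Fin n → Fin (N + 1) :=
  if h : i + 1 < n then u ∘ Equiv.swap ⟨i, Nat.lt_of_succ_lt h⟩ ⟨i + 1, h⟩ else u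

/-- Jones's bowling-ball matrix `M_i` (0-indexed: `i` ranges over `0,…,n-2`,
corresponding to the lanes `i+1` and `i+2` in 1-indexed notation; it is the
identity matrix out of range).  Rows and columns are indexed by the tuples
`u : Fin n → Fin (N+1)` recording the number of balls in each lane:
`M_i e_u = e_{s_i u}` if `u i ≤ u (i+1)`, and
`M_i e_u = q • e_{s_i u} + (1-q) • e_u` if `u i > u (i+1)`. -/
def bowlM (F : Type*) [Field F] (q : F) (n N : ℕ) (i : ℕ) :
    Matrix (Fin n → Fin (N + 1)) (Fin n → Fin (N + 1)) F :=
  if h : i + 1 < n then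
    Matrix.of fun v u =>
      if u ⟨i, Nat.lt_of_succ_lt h⟩ ≤ u ⟨i + 1, h⟩ then
        (if v = swapTup n N i u then 1 else 0)
      else
        q * (if v = swapTup n N i u then 1 else 0) + (1 - q) * (if v = u then 1 else 0)
  else 1

/-- **Iwahori–Hecke quadratic relation (Theorem 2).**
For every index `i` (0-indexed, so `i+1 < n` corresponds to `1 ≤ i ≤ n-1`
in 1-indexed notation), the bowling-ball matrix satisfies
`(q·I + M_i)(I − M_i) = 0`. -/
theorem bowlM_quadratic_relation (F : Type*) [Field F] (q : F) (n N : ℕ)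
    (hn : 2 ≤ n) (hN : 1 ≤ N) (i : ℕ) (hi : i + 1 < n) :
    (q • (1 : Matrix (Fin n → Fin (N + 1)) (Fin n → Fin (N + 1)) F) + bowlM F q n N i) *
      (1 - bowlM F q n N i) = 0 := by
  have hi1 : i < n := Nat.lt_of_succ_lt hi
  set a : Fin n := ⟨i, hi1⟩ with ha
  set b : Fin n := ⟨i + 1, hi⟩ with hb
  set σ : Equiv.Perm (Fin n) := Equiv.swap a b with hσ
  have hσa : σ a = b := Equiv.swap_apply_left a b
  have hσb : σ b = a := Equiv.swap_apply_right a b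
  have hσσ : ∀ u : Fin n → Fin (N + 1), (u ∘ σ) ∘ σ = u := by
    intro u; funext x; simp [σ, Equiv.swap_apply_self]
  have hM : bowlM F q n N i = Matrix.of fun v u =>
      if u a ≤ u b then (if v = u ∘ σ then 1 else 0)
      else q * (if v = u ∘ σ then 1 else 0) + (1 - q) * (if v = u then 1 else 0) := by
    simp only [bowlM, swapTup, dif_pos hi]
    rfl
  have hM2 : bowlM F q n N i * bowlM F q n N i
      = (1 - q) • bowlM F q n N i + q • 1 := by
    ext v u
    rw [Matrix.mul_apply]
    by_cases h : u a ≤ u b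
    · rcases eq_or_lt_of_le h with heq | hlt
      · have huσ : u ∘ σ = u := by
          funext x
          rcases eq_or_ne x a with rfl | hxa
          · simp [hσa, ← heq]
          rcases eq_or_ne x b with rfl | hxb
          · simp [hσb, heq]
          · simp [σ, Equiv.swap_apply_of_ne_of_ne hxa hxb]
        simp only [hM, Matrix.of_apply, huσ, if_pos h, mul_ite, mul_one, mul_zero,
          Finset.sum_ite_eq', Finset.mem_univ, if_true, Matrix.add_apply,
          Matrix.smul_apply, Matrix.one_apply, smul_eq_mul]
        by_cases hv : v = u <;> simp [hv] <;> try ring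
      · have hlt' : ¬ (u ∘ σ) a ≤ (u ∘ σ) b := by
          simp [hσa, hσb, not_le, hlt]
        simp only [hM, Matrix.of_apply, if_pos h, mul_ite, mul_one, mul_zero,
          Finset.sum_ite_eq', Finset.mem_univ, if_true, if_neg hlt', hσσ,
          Matrix.add_apply, Matrix.smul_apply, Matrix.one_apply, smul_eq_mul]
        ring
    · have hle : (u ∘ σ) a ≤ (u ∘ σ) b := by
        simp only [Function.comp, hσa, hσb]
        exact le_of_lt (lt_of_not_ge h)
      have hne : u ≠ u ∘ σ := by
        intro he
        have hc := congrFun he a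
        rw [Function.comp_apply, hσa] at hc
        exact h (le_of_eq hc)
      simp only [hM, Matrix.of_apply, if_neg h, if_pos hle, hσσ, mul_add, mul_ite,
        mul_one, mul_zero, Finset.sum_add_distrib, Finset.sum_ite_eq',
        Finset.mem_univ, if_true, Matrix.add_apply, Matrix.smul_apply,
        Matrix.one_apply, smul_eq_mul]
      by_cases hv : v = u <;> by_cases hv2 : v = u ∘ σ <;> simp [hv, hv2, hne, hne.symm] <;> try ring
  rw [mul_sub, mul_one, add_mul, smul_mul_assoc, one_mul, hM2]
  module
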